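/- Let (X, 𝒜, μ) be a finite measure space with 0 < μ(X) < ∞ and let S : X → X be measure preserving (μ(S⁻¹(A)) = μ(A) for all A ∈ 𝒜) and ergodic (every A ∈ 𝒜 with S⁻¹(A) = A satisfies μ(A) = 0 or μ(X∖A) = 0). Then for every integrable function ϑ : X → ℝ, for μ-almost every x ∈ X the time averages (1/n) Σ_{k=0}^{n-1} ϑ(Sᵏ(x)) converge, as n → ∞, to the space average (1/μ(X)) ∫_X ϑ dμ. -/

import Mathlib

open MeasureTheory Filter Topology

namespace Birk
set_option linter.unusedSectionVars false

variable {X : Type*} [MeasurableSpace X]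

noncomputable def bS (S : X → X) (f : X → ℝ) (n : ℕ) (x : X) : ℝ :=
  ∑ k ∈ Finset.range n, f (S^[k] x)

noncomputable def bM (S : X → X) (f : X → ℝ) : ℕ → X → ℝ
  | 0 => fun x => bS S f 1 x
  | (N+1) => fun x => max (bM S f N x) (bS S f (N+2) x)

lemma bS_one (S : X → X) (f : X → ℝ) (x : X) : bS S f 1 x = f x := by
  simp [bS]

lemma bS_succ (S : X → X) (f : X → ℝ) (n : ℕ) (x : X) :
    bS S f (n+1) x = bS S f n (S x) + f x := by
  rw [bS, Finset.sum_range_succ']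
  simp [bS, Function.iterate_succ_apply]

lemma bS_meas {S : X → X} (hS : Measurable S) {f : X → ℝ} (hf : Measurable f) (n : ℕ) :
    Measurable (bS S f n) :=
  Finset.measurable_sum _ fun k _ => hf.comp (hS.iterate k)

lemma bM_meas {S : X → X} (hS : Measurable S) {f : X → ℝ} (hf : Measurable f) (N : ℕ) :
    Measurable (bM S f N) := by
  induction N with
  | zero => exact bS_meas hS hf 1
  | succ N ih => exact ih.max (bS_meas hS hf (N+2))

lemma bM_mono (S : X → X) (f : X → ℝ) (N : ℕ) (x : X) : bM S f N x ≤ bM S f (N+1) x :=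
  le_max_left _ _

lemma bS_le_bM (S : X → X) (f : X → ℝ) (N : ℕ) (x : X) : bS S f (N+1) x ≤ bM S f N x := by
  cases N with
  | zero => exact le_rfl
  | succ N => exact le_max_right _ _

lemma bM_le_of_le (S : X → X) (f : X → ℝ) {M N : ℕ} (h : M ≤ N) (x : X) :
    bM S f M x ≤ bM S f N x := by
  induction N with
  | zero => have : M = 0 := Nat.le_zero.mp h
            subst this; exact le_rfl
  | succ N ih =>
    rcases Nat.eq_or_lt_of_le h with rfl | hlt
    · exact le_rfl
    · exact (ih (Nat.lt_succ_iff.mp hlt)).trans (bM_mono S f N x)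

lemma bM_key (S : X → X) (f : X → ℝ) (N : ℕ) (x : X) :
    bM S f N x ≤ f x + max (bM S f N (S x)) 0 := by
  induction N with
  | zero =>
    simp only [bM, bS_one]
    linarith [le_max_right (f (S x)) (0:ℝ)]
  | succ N ih =>
    simp only [bM]
    refine max_le ?_ ?_
    · exact le_trans ih (by gcongr; exact le_max_left _ _)
    · rw [bS_succ]
      have h1 : bS S f (N+1) (S x) ≤ bM S f N (S x) := bS_le_bM S f N (S x)
      have h2 : bM S f N (S x) ≤ max (max (bM S f N (S x)) (bS S f (N+2) (S x))) 0 :=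
        le_trans (le_max_left _ _) (le_max_left _ _)
      linarith

variable {μ : Measure X} [IsFiniteMeasure μ]

lemma bS_integrable {S : X → X} (hMP : MeasurePreserving S μ μ) {f : X → ℝ}
    (hf : Integrable f μ) (n : ℕ) : Integrable (bS S f n) μ := by
  have : ∀ k : ℕ, Integrable (fun x => f (S^[k] x)) μ := fun k =>
    ((hMP.iterate k).integrable_comp hf.aestronglyMeasurable).2 hf
  exact integrable_finset_sum _ fun k _ => this k

lemma bM_integrable {S : X → X} (hMP : MeasurePreserving S μ μ) {f : X → ℝ}
    (hf : Integrable f μ) (N : ℕ) : Integrable (bM S f N) μ := by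
  induction N with
  | zero => exact (bS_integrable hMP hf 1).congr (Filter.Eventually.of_forall fun x => rfl)
  | succ N ih =>
    have := ih.sup (bS_integrable hMP hf (N+2))
    exact this.congr (by filter_upwards with x; simp [bM, max_def])

/-- Maximal ergodic theorem (Garsia's proof). -/
lemma maximal {S : X → X} (hS : Measurable S) (hMP : MeasurePreserving S μ μ)
    {g : X → ℝ} (hgm : Measurable g) (hgi : Integrable g μ) :
    0 ≤ ∫ x, Set.indicator {y | ∃ n, 1 ≤ n ∧ 0 < bS S g n y} g x ∂μ := by
  set A : ℕ → Set X := fun N => {y | 0 < bM S g N y} with hA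
  have hAmeas : ∀ N, MeasurableSet (A N) :=
    fun N => measurableSet_lt measurable_const (bM_meas hS hgm N)
  -- each partial integral is nonnegative
  have hstep : ∀ N : ℕ, 0 ≤ ∫ x, Set.indicator (A N) g x ∂μ := by
    intro N
    set h : X → ℝ := fun x => max (bM S g N x) 0 with hh
    have hhi : Integrable h μ := (bM_integrable hMP hgi N).sup (integrable_const 0)
    have hhm : Measurable h := (bM_meas hS hgm N).max measurable_const
    have hhSi : Integrable (fun x => h (S x)) μ :=
      (hMP.integrable_comp hhi.aestronglyMeasurable).2 hhi
    have hpt : ∀ x, h x - h (S x) ≤ Set.indicator (A N) g x := by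
      intro x
      by_cases hx : x ∈ A N
      · rw [Set.indicator_of_mem hx]
        have h1 : bM S g N x ≤ g x + h (S x) := bM_key S g N x
        have h2 : h x = bM S g N x := max_eq_left (le_of_lt hx)
        linarith
      · rw [Set.indicator_of_notMem hx]
        have h1 : h x = 0 := max_eq_right (le_of_not_gt (fun hc => hx hc))
        have h2 : 0 ≤ h (S x) := le_max_right _ _
        linarith
    have hint : ∫ x, (h x - h (S x)) ∂μ = 0 := by
      rw [integral_sub hhi hhSi]
      have h' : AEStronglyMeasurable h (Measure.map S μ) := by
        rw [hMP.map_eq]; exact hhi.aestronglyMeasurable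
      have : ∫ x, h (S x) ∂μ = ∫ x, h x ∂μ := by
        calc ∫ x, h (S x) ∂μ = ∫ y, h y ∂(Measure.map S μ) :=
              (integral_map hS.aemeasurable h').symm
          _ = ∫ y, h y ∂μ := by rw [hMP.map_eq]
      rw [this, sub_self]
    calc (0:ℝ) = ∫ x, (h x - h (S x)) ∂μ := hint.symm
      _ ≤ ∫ x, Set.indicator (A N) g x ∂μ :=
        integral_mono (hhi.sub hhSi) (hgi.indicator (hAmeas N)) hpt
  -- pass to the limit
  set Ainf : Set X := {y | ∃ n, 1 ≤ n ∧ 0 < bS S g n y} with hAinf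
  have hsub : ∀ N, A N ⊆ Ainf := by
    intro N x hx
    -- 0 < bM S g N x means some bS S g (k+1) x > 0
    have : ∃ k, k ≤ N ∧ bM S g N x = bS S g (k+1) x := by
      clear hx
      induction N with
      | zero => exact ⟨0, le_rfl, rfl⟩
      | succ N ih =>
        rcases ih with ⟨k, hk, hkeq⟩
        rcases le_or_gt (bS S g (N+2) x) (bM S g N x) with hle | hlt
        · exact ⟨k, hk.trans (Nat.le_succ N), (max_eq_left hle).trans hkeq⟩
        · exact ⟨N+1, le_rfl, max_eq_right hlt.le⟩
    rcases this with ⟨k, _, hkeq⟩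
    exact ⟨k+1, Nat.le_add_left 1 k, by rw [← hkeq]; exact hx⟩
  have hmono : ∀ N x, x ∈ A N → x ∈ A (N+1) :=
    fun N x hx => lt_of_lt_of_le hx (bM_mono S g N x)
  have hAinfmeas : MeasurableSet Ainf := by
    have : Ainf = ⋃ n, ⋃ (_ : 1 ≤ n), {y | 0 < bS S g n y} := by
      ext y; simp [hAinf]
    rw [this]
    exact MeasurableSet.iUnion fun n => MeasurableSet.iUnion fun _ =>
      measurableSet_lt measurable_const (bS_meas hS hgm n)
  have htend : Tendsto (fun N => ∫ x, Set.indicator (A N) g x ∂μ) atTop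
      (𝓝 (∫ x, Set.indicator Ainf g x ∂μ)) := by
    refine tendsto_integral_of_dominated_convergence (fun x => |g x|)
      (fun N => (hgm.indicator (hAmeas N)).aestronglyMeasurable)
      hgi.abs ?_ ?_
    · intro N
      filter_upwards with x
      rw [Real.norm_eq_abs]
      by_cases hx : x ∈ A N
      · rw [Set.indicator_of_mem hx]
      · rw [Set.indicator_of_notMem hx]; simpa using abs_nonneg (g x)
    · filter_upwards with x
      by_cases hx : x ∈ Ainf
      · obtain ⟨n, hn1, hn⟩ := id hx
        have hxA : x ∈ A (n-1) := by
          have : bS S g ((n-1)+1) x = bS S g n x := by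
            congr 1; omega
          have h2 : bS S g n x ≤ bM S g (n-1) x := by
            rw [← this]; exact bS_le_bM S g (n-1) x
          exact lt_of_lt_of_le hn h2
        have hev : ∀ᶠ N in atTop, Set.indicator (A N) g x = Set.indicator Ainf g x := by
          filter_upwards [eventually_ge_atTop (n-1)] with N hN
          have hxN : x ∈ A N := lt_of_lt_of_le hxA (bM_le_of_le S g hN x)
          rw [Set.indicator_of_mem hxN, Set.indicator_of_mem hx]
        exact Tendsto.congr' (hev.mono fun N h => h.symm) tendsto_const_nhds
      · have : ∀ N, Set.indicator (A N) g x = 0 := fun N =>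
          Set.indicator_of_notMem (fun hc => hx (hsub N hc)) g
        rw [Set.indicator_of_notMem hx]
        simpa [this] using tendsto_const_nhds
  exact ge_of_tendsto' htend hstep

lemma bS_sub_const (S : X → X) (f : X → ℝ) (c : ℝ) (n : ℕ) (x : X) :
    bS S (fun y => f y - c) n x = bS S f n x - n * c := by
  simp [bS, Finset.sum_sub_distrib, mul_comm]

lemma cancel_aux {n : ℕ} (hn : (0:ℝ) < n) (B q : ℝ) (h : q < (n:ℝ)⁻¹ * B) :
    (n:ℝ) * q < B := by
  have h2 := mul_lt_mul_of_pos_left h hn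
  rwa [show (n:ℝ) * ((n:ℝ)⁻¹ * B) = B by field_simp] at h2

lemma cancel_aux' {n : ℕ} (hn : (0:ℝ) < n) (B q : ℝ) (h : q * (n:ℝ) < B) :
    q < (n:ℝ)⁻¹ * B := by
  have h2 := mul_lt_mul_of_pos_left h (inv_pos.mpr hn)
  rwa [show (n:ℝ)⁻¹ * (q * (n:ℝ)) = q by field_simp] at h2

/-- Key upper-bound lemma. -/
lemma key {S : X → X} (hS : Measurable S) (hMP : MeasurePreserving S μ μ)
    (herg : ∀ A : Set X, MeasurableSet A → S ⁻¹' A = A → μ A = 0 ∨ μ Aᶜ = 0)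
    {f : X → ℝ} (hfm : Measurable f) (hfi : Integrable f μ) (α : ℝ)
    (hα : ∫ x, f x ∂μ < α * (μ Set.univ).toReal) :
    ∀ᵐ x ∂μ, ∀ q : ℚ, α < q → ∀ᶠ n : ℕ in atTop, (n:ℝ)⁻¹ * bS S f n x ≤ q := by
  set a : ℕ → X → ℝ := fun n x => (n:ℝ)⁻¹ * bS S f n x with ha
  set D : Set X := {x | ∃ q : ℚ, α < q ∧ ∀ N : ℕ, ∃ n, N ≤ n ∧ (q:ℝ) < a n x} with hD
  have hameas : ∀ n, Measurable (a n) := fun n => (bS_meas hS hfm n).const_mul _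
  have hDmeas : MeasurableSet D := by
    have : D = ⋃ q : ℚ, ⋃ (_ : α < (q:ℝ)), ⋂ N : ℕ, ⋃ n : ℕ, ⋃ (_ : N ≤ n),
        {x | (q:ℝ) < a n x} := by
      ext x
      simp only [hD, Set.mem_setOf_eq, Set.mem_iUnion, Set.mem_iInter, exists_prop]
    rw [this]
    exact MeasurableSet.iUnion fun q => MeasurableSet.iUnion fun _ =>
      MeasurableSet.iInter fun N => MeasurableSet.iUnion fun n => MeasurableSet.iUnion fun _ =>
        measurableSet_lt measurable_const (hameas n)
  have hinv : S ⁻¹' D = D := by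
    ext x
    simp only [Set.mem_preimage, hD, Set.mem_setOf_eq]
    constructor
    · rintro ⟨q, hq, H⟩
      obtain ⟨q', hq1, hq2⟩ := exists_rat_btwn hq
      refine ⟨q', hq1, fun N => ?_⟩
      obtain ⟨n, hn1, hn2⟩ := H (max N (max 1 ⌈((q':ℝ) - f x) / ((q:ℝ) - (q':ℝ))⌉₊))
      have h1n : (1:ℕ) ≤ n := le_trans (le_trans (le_max_left 1 _) (le_max_right N _)) hn1
      have hNn : N ≤ n + 1 := le_trans (le_trans (le_max_left N _) hn1) (Nat.le_succ n)
      have hcl : ⌈((q':ℝ) - f x) / ((q:ℝ) - (q':ℝ))⌉₊ ≤ n :=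
        le_trans (le_trans (le_max_right 1 _) (le_max_right N _)) hn1
      have hqq' : (0:ℝ) < (q:ℝ) - (q':ℝ) := by
        have : (q':ℝ) < q := by exact_mod_cast hq2
        linarith
      have hnR : ((q':ℝ) - f x) / ((q:ℝ) - (q':ℝ)) ≤ (n:ℝ) :=
        le_trans (Nat.le_ceil _) (by exact_mod_cast hcl)
      have harith : (q':ℝ) - f x ≤ (n:ℝ) * ((q:ℝ) - (q':ℝ)) := by
        rw [div_le_iff₀ hqq'] at hnR; linarith
      have hnpos : (0:ℝ) < n := by exact_mod_cast h1n
      have hbS : (n:ℝ) * q < bS S f n (S x) := cancel_aux hnpos _ _ hn2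
      refine ⟨n + 1, hNn, ?_⟩
      have hbS1 : bS S f (n+1) x = bS S f n (S x) + f x := bS_succ S f n x
      show (q':ℝ) < ((n+1:ℕ):ℝ)⁻¹ * bS S f (n+1) x
      have hcast : ((n+1:ℕ):ℝ) = (n:ℝ) + 1 := by push_cast; ring
      have hpos1 : (0:ℝ) < ((n+1:ℕ):ℝ) := by rw [hcast]; positivity
      have key2 : (q':ℝ) * ((n+1:ℕ):ℝ) < bS S f (n+1) x := by
        rw [hcast, hbS1]; nlinarith
      exact cancel_aux' (by exact_mod_cast hpos1) _ _ key2
    · rintro ⟨q, hq, H⟩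
      obtain ⟨q', hq1, hq2⟩ := exists_rat_btwn hq
      refine ⟨q', hq1, fun N => ?_⟩
      obtain ⟨n, hn1, hn2⟩ := H (max (N+2) (⌈(f x - (q':ℝ)) / ((q:ℝ) - (q':ℝ))⌉₊ + 1))
      obtain ⟨m, rfl⟩ : ∃ m, n = m + 1 := ⟨n - 1, by omega⟩
      have hmN : N ≤ m := by omega
      have hm1 : (1:ℕ) ≤ m := by omega
      have hcl : ⌈(f x - (q':ℝ)) / ((q:ℝ) - (q':ℝ))⌉₊ ≤ m := by omega
      have hqq' : (0:ℝ) < (q:ℝ) - (q':ℝ) := by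
        have : (q':ℝ) < q := by exact_mod_cast hq2
        linarith
      have hnR : (f x - (q':ℝ)) / ((q:ℝ) - (q':ℝ)) ≤ (m:ℝ) :=
        le_trans (Nat.le_ceil _) (by exact_mod_cast hcl)
      have harith : f x - (q':ℝ) ≤ (m:ℝ) * ((q:ℝ) - (q':ℝ)) := by
        rw [div_le_iff₀ hqq'] at hnR; linarith
      have hq'q : (q':ℝ) ≤ (q:ℝ) := by
        have : (q':ℝ) < q := by exact_mod_cast hq2
        linarith
      have hmpos : (0:ℝ) < m := by exact_mod_cast hm1
      have hm1pos : (0:ℝ) < ((m+1:ℕ):ℝ) := by positivity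
      have hbS : ((m+1:ℕ):ℝ) * q < bS S f (m+1) x := cancel_aux (by exact_mod_cast hm1pos) _ _ hn2
      refine ⟨m, hmN, ?_⟩
      have hbS1 : bS S f (m+1) x = bS S f m (S x) + f x := bS_succ S f m x
      show (q':ℝ) < ((m:ℕ):ℝ)⁻¹ * bS S f m (S x)
      have hcast : ((m+1:ℕ):ℝ) = (m:ℝ) + 1 := by push_cast; ring
      have key2 : (q':ℝ) * ((m:ℕ):ℝ) < bS S f m (S x) := by
        have h5 : bS S f m (S x) = bS S f (m+1) x - f x := by rw [hbS1]; ring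
        rw [h5]
        rw [hcast] at hbS
        nlinarith
      exact cancel_aux' hmpos _ _ key2
  have hD0 : μ D = 0 := by
    by_contra h0
    have hDc : μ Dᶜ = 0 := (herg D hDmeas hinv).resolve_left h0
    set g : X → ℝ := fun y => f y - α with hg
    have hgm : Measurable g := hfm.sub measurable_const
    have hgi : Integrable g μ := hfi.sub (integrable_const α)
    have hmax := maximal hS hMP hgm hgi
    have hsub : D ⊆ {y | ∃ n, 1 ≤ n ∧ 0 < bS S g n y} := by
      rintro x ⟨q, hq, H⟩
      obtain ⟨n, hn1, hn2⟩ := H 1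
      refine ⟨n, hn1, ?_⟩
      have hnpos : (0:ℝ) < n := by exact_mod_cast hn1
      have hbS : (n:ℝ) * q < bS S f n x := cancel_aux hnpos _ _ hn2
      have h6 : bS S g n x = bS S f n x - n * α := bS_sub_const S f α n x
      have h7 : (n:ℝ) * α < (n:ℝ) * q := by
        have : α < (q:ℝ) := hq
        nlinarith
      rw [h6]; linarith
    have hAc : μ {y | ∃ n, 1 ≤ n ∧ 0 < bS S g n y}ᶜ = 0 :=
      measure_mono_null (Set.compl_subset_compl.mpr hsub) hDc
    have hmem : ∀ᵐ x ∂μ, x ∈ {y | ∃ n, 1 ≤ n ∧ 0 < bS S g n y} := by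
      rw [ae_iff]; exact hAc
    have heq : Set.indicator {y | ∃ n, 1 ≤ n ∧ 0 < bS S g n y} g =ᵐ[μ] g := by
      filter_upwards [hmem] with x hx
      exact Set.indicator_of_mem (show x ∈ {y | ∃ n, 1 ≤ n ∧ 0 < bS S g n y} from hx) g
    have h2 : (0:ℝ) ≤ ∫ x, g x ∂μ := le_trans hmax (le_of_eq (integral_congr_ae heq))
    have h3 : ∫ x, g x ∂μ = ∫ x, f x ∂μ - α * (μ Set.univ).toReal := by
      have : ∫ x, g x ∂μ = ∫ x, f x ∂μ - ∫ _, α ∂μ :=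
        integral_sub hfi (integrable_const α)
      rw [this, integral_const, smul_eq_mul, measureReal_def]; ring
    linarith
  have hae : ∀ᵐ x ∂μ, x ∉ D := by
    rw [ae_iff]; simpa using hD0
  filter_upwards [hae] with x hx q hq
  by_contra hcon
  apply hx
  refine ⟨q, hq, fun N => ?_⟩
  rw [eventually_atTop] at hcon
  push_neg at hcon
  obtain ⟨n, hn1, hn2⟩ := hcon N
  exact ⟨n, hn1, hn2⟩


/-- Main theorem assembly. -/
theorem main_birkhoff
    {X : Type*} [MeasurableSpace X] (μ : Measure X) [IsFiniteMeasure μ]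
    (hμpos : 0 < μ Set.univ)
    (S : X → X) (hS : Measurable S)
    (hpres : ∀ A : Set X, MeasurableSet A → μ (S ⁻¹' A) = μ A)
    (herg : ∀ A : Set X, MeasurableSet A → S ⁻¹' A = A → μ A = 0 ∨ μ Aᶜ = 0)
    (ϑ : X → ℝ) (hϑ : Integrable ϑ μ) :
    ∀ᵐ x ∂μ, Tendsto
      (fun n : ℕ => (n : ℝ)⁻¹ * ∑ k ∈ Finset.range n, ϑ (S^[k] x))
      atTop (𝓝 (((μ Set.univ).toReal)⁻¹ * ∫ x, ϑ x ∂μ)) := by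
  have hMP : MeasurePreserving S μ μ :=
    ⟨hS, Measure.ext fun A hA => (Measure.map_apply hS hA).trans (hpres A hA)⟩
  set f : X → ℝ := hϑ.1.mk ϑ with hf
  have hfm : Measurable f := hϑ.1.stronglyMeasurable_mk.measurable
  have hae : ϑ =ᵐ[μ] f := hϑ.1.ae_eq_mk
  have hfi : Integrable f μ := hϑ.congr hae
  set T : ℝ := (μ Set.univ).toReal with hT
  have hTpos : 0 < T := ENNReal.toReal_pos (ne_of_gt hμpos) (measure_ne_top μ _)
  set m : ℝ := T⁻¹ * ∫ x, ϑ x ∂μ with hm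
  have hint : ∫ x, f x ∂μ = ∫ x, ϑ x ∂μ := integral_congr_ae hae.symm
  have hintm : ∫ x, ϑ x ∂μ = T * m := by
    rw [hm]; field_simp
  -- upper bounds
  have hup : ∀ᵐ x ∂μ, ∀ r : ℚ, m < r → ∀ q : ℚ, (r:ℝ) < q →
      ∀ᶠ n : ℕ in atTop, (n:ℝ)⁻¹ * bS S f n x ≤ q := by
    rw [ae_all_iff]
    intro r
    by_cases hr : m < r
    · have hcond : ∫ x, f x ∂μ < (r:ℝ) * T := by
        rw [hint, hintm]; nlinarith
      filter_upwards [key hS hMP herg hfm hfi (r:ℝ) hcond] with x hx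
      intro _ q hq
      exact hx q hq
    · exact Filter.Eventually.of_forall fun x hc => absurd hc hr
  -- lower bounds via -f
  have hnegint : Integrable (fun y => -f y) μ := hfi.neg
  have hnegm : Measurable fun y => -f y := hfm.neg
  have hbSneg : ∀ n x, bS S (fun y => -f y) n x = -bS S f n x := by
    intro n x; simp [bS]
  have hlow : ∀ᵐ x ∂μ, ∀ r : ℚ, -m < r → ∀ q : ℚ, (r:ℝ) < q →
      ∀ᶠ n : ℕ in atTop, -((n:ℝ)⁻¹ * bS S f n x) ≤ q := by
    rw [ae_all_iff]
    intro r
    by_cases hr : -m < r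
    · have hcond : ∫ x, (fun y => -f y) x ∂μ < (r:ℝ) * T := by
        simp only [integral_neg, hint, hintm]
        nlinarith
      filter_upwards [key hS hMP herg hnegm hnegint (r:ℝ) hcond] with x hx
      intro _ q hq
      filter_upwards [hx q hq] with n hn
      rw [hbSneg] at hn
      linarith [hn]
    · exact Filter.Eventually.of_forall fun x hc => absurd hc hr
  -- transfer ϑ to f along orbits
  have hcomp : ∀ k : ℕ, (fun x => ϑ (S^[k] x)) =ᵐ[μ] fun x => f (S^[k] x) := by
    intro k
    have := ae_eq_comp (μ := μ) (hMP.iterate k).measurable.aemeasurable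
      (g := ϑ) (g' := f) (by rw [(hMP.iterate k).map_eq]; exact hae)
    exact this
  have hall : ∀ᵐ x ∂μ, ∀ k : ℕ, ϑ (S^[k] x) = f (S^[k] x) := ae_all_iff.2 hcomp
  filter_upwards [hall, hup, hlow] with x hx hupx hlowx
  have hfun : (fun n : ℕ => (n:ℝ)⁻¹ * ∑ k ∈ Finset.range n, ϑ (S^[k] x))
      = fun n : ℕ => (n:ℝ)⁻¹ * bS S f n x := by
    funext n
    rw [show ∑ k ∈ Finset.range n, ϑ (S^[k] x) = bS S f n x from
      Finset.sum_congr rfl fun k _ => hx k]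
  rw [hfun]
  refine tendsto_order.2 ⟨?_, ?_⟩
  · intro b hb
    obtain ⟨r, hr1, hr2⟩ := exists_rat_btwn (show -m < -b by linarith)
    obtain ⟨q, hq1, hq2⟩ := exists_rat_btwn hr2
    have hq1' : (r:ℝ) < q := by exact_mod_cast hq1
    filter_upwards [hlowx r hr1 q hq1'] with n hn
    have : (q:ℝ) < -b := hq2
    linarith
  · intro b hb
    obtain ⟨r, hr1, hr2⟩ := exists_rat_btwn hb
    obtain ⟨q, hq1, hq2⟩ := exists_rat_btwn hr2
    have hq1' : (r:ℝ) < q := by exact_mod_cast hq1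
    filter_upwards [hupx r hr1 q hq1'] with n hn
    linarith

end Birk


/-- **Birkhoff ergodic theorem.** Let `(X, 𝒜, μ)` be a finite measure space with
`0 < μ(X) < ∞` and let `S : X → X` be measure preserving and ergodic.  Then for every integrable
`ϑ : X → ℝ`, for μ-a.e. `x` the time averages `(1/n) Σ_{k<n} ϑ(Sᵏ x)` converge to the space
average `(1/μ(X)) ∫_X ϑ dμ`. -/
theorem birkhoff_ergodic_average
    {X : Type*} [MeasurableSpace X] (μ : Measure X) [IsFiniteMeasure μ]
    (hμpos : 0 < μ Set.univ)
    (S : X → X) (hS : Measurable S)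
    (hpres : ∀ A : Set X, MeasurableSet A → μ (S ⁻¹' A) = μ A)
    (herg : ∀ A : Set X, MeasurableSet A → S ⁻¹' A = A → μ A = 0 ∨ μ Aᶜ = 0)
    (ϑ : X → ℝ) (hϑ : Integrable ϑ μ) :
    ∀ᵐ x ∂μ, Tendsto
      (fun n : ℕ => (n : ℝ)⁻¹ * ∑ k ∈ Finset.range n, ϑ (S^[k] x))
      atTop (𝓝 (((μ Set.univ).toReal)⁻¹ * ∫ x, ϑ x ∂μ)) := by
  exact Birk.main_birkhoff μ hμpos S hS hpres herg ϑ hϑ
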